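/- If C is a binary self-dual code of length N in which every weight is divisible by 4 (Type II), then N is divisible by 8. -/

import Mathlib

open Finset

/-- Hamming weight of a vector. -/
def wt {F : Type*} [Zero F] [DecidableEq F] {N : ℕ} (c : Fin N → F) : ℕ :=
  (univ.filter fun i => c i ≠ 0).card

/-- Weight enumerator of a (finite) code, evaluated at `x, y : ℂ`. -/
noncomputable def Wenum {F : Type*} [Zero F] [DecidableEq F] {N : ℕ}
    (C : Finset (Fin N → F)) (x y : ℂ) : ℂ :=
  ∑ c ∈ C, x ^ (N - wt c) * y ^ (wt c)

/-- The dual code, with respect to the standard bilinear form. -/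
def dualCode {F : Type*} [CommRing F] [DecidableEq F] [Fintype F] {N : ℕ}
    (C : Finset (Fin N → F)) : Finset (Fin N → F) :=
  univ.filter fun u => ∀ c ∈ C, ∑ i, u i * c i = 0

open Complex

noncomputable def sgn2 (x : ZMod 2) : ℂ := (-1) ^ x.val

lemma sgn2_zero : sgn2 0 = 1 := by simp [sgn2]

lemma sgn2_one : sgn2 1 = -1 := by
  have : (1 : ZMod 2).val = 1 := rfl
  simp [sgn2, this]

lemma sgn2_add (a b : ZMod 2) : sgn2 (a + b) = sgn2 a * sgn2 b := by
  have h : ∀ x : ZMod 2, x = 0 ∨ x = 1 := by decide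
  rcases h a with ha | ha <;> rcases h b with hb | hb <;>
    subst ha <;> subst hb <;>
    simp [sgn2_zero, sgn2_one, show ((1:ZMod 2) + 1) = 0 from by decide]

lemma sgn2_sum {ι : Type*} (t : Finset ι) (g : ι → ZMod 2) :
    sgn2 (∑ i ∈ t, g i) = ∏ i ∈ t, sgn2 (g i) := by
  induction t using Finset.cons_induction with
  | empty => simp [sgn2_zero]
  | cons a t ha ih => rw [Finset.sum_cons, Finset.prod_cons, sgn2_add, ih]

lemma I_pow_four' : (Complex.I) ^ 4 = 1 := by
  norm_num [pow_succ, Complex.I_mul_I]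

lemma negI_pow_four : (-Complex.I) ^ 4 = 1 := by
  norm_num [pow_succ]

lemma onePlusI_pow_eight : ((1 : ℂ) + Complex.I) ^ 8 = 16 := by
  have h2 : ((1:ℂ) + Complex.I) ^ 2 = 2 * Complex.I := by
    have := Complex.I_sq
    ring_nf
    rw [Complex.I_sq]; ring
  calc ((1:ℂ) + Complex.I) ^ 8 = (((1:ℂ)+Complex.I)^2)^4 := by ring
    _ = (2*Complex.I)^4 := by rw [h2]
    _ = 16 := by rw [mul_pow, I_pow_four']; norm_num

lemma zmod2_cases : ∀ x : ZMod 2, x = 0 ∨ x = 1 := by decide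

lemma wt_eq_sum_val {N : ℕ} (u : Fin N → ZMod 2) : wt u = ∑ i, (u i).val := by
  rw [wt, Finset.card_filter]
  refine Finset.sum_congr rfl fun i _ => ?_
  rcases zmod2_cases (u i) with h | h <;> rw [h] <;> decide

/-- The length of a Type II (doubly even self-dual) binary code is divisible by 8. -/
theorem typeII_length_div_eight {N : ℕ}
    (C : Finset (Fin N → ZMod 2)) (M : Submodule (ZMod 2) (Fin N → ZMod 2))
    (hC : ∀ v, v ∈ C ↔ v ∈ M) (hsd : dualCode C = C)
    (hII : ∀ c ∈ C, 4 ∣ wt c) :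
    8 ∣ N := by
  classical
  -- C is nonempty
  have hzero : (0 : Fin N → ZMod 2) ∈ C := by
    rw [← hsd, dualCode, Finset.mem_filter]
    exact ⟨Finset.mem_univ _, fun c _ => by simp⟩
  have hcardpos : 0 < C.card := Finset.card_pos.mpr ⟨0, hzero⟩
  have h2 : ∀ x : ZMod 2, x + x = 0 := by decide
  -- Side B: character orthogonality
  have hchi : ∀ u : Fin N → ZMod 2,
      (∑ c ∈ C, sgn2 (∑ i, u i * c i)) = if u ∈ C then (C.card : ℂ) else 0 := by
    intro u
    by_cases hu : u ∈ C
    · rw [if_pos hu]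
      have hu' : u ∈ dualCode C := by rw [hsd]; exact hu
      rw [dualCode, Finset.mem_filter] at hu'
      rw [Finset.sum_congr rfl fun c hc => by rw [hu'.2 c hc, sgn2_zero]]
      simp
    · rw [if_neg hu]
      have : ¬ (∀ c ∈ C, ∑ i, u i * c i = 0) := by
        intro h
        exact hu (hsd ▸ (Finset.mem_filter.mpr ⟨Finset.mem_univ _, h⟩))
      push_neg at this
      obtain ⟨c0, hc0C, hc0⟩ := this
      have hc01 : ∑ i, u i * c0 i = 1 := by
        rcases zmod2_cases (∑ i, u i * c0 i) with h | h
        · exact absurd h hc0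
        · exact h
      have hmem : ∀ c : Fin N → ZMod 2, c ∈ C ↔ c + c0 ∈ C := by
        intro c
        constructor
        · intro hc
          exact (hC _).mpr (M.add_mem ((hC _).mp hc) ((hC _).mp hc0C))
        · intro hc
          have : c + c0 + c0 = c := by funext i; simp [add_assoc, h2 (c0 i)]
          have h' := (hC _).mpr (M.add_mem ((hC _).mp hc) ((hC _).mp hc0C))
          rwa [this] at h'
      have key : (∑ c ∈ C, sgn2 (∑ i, u i * (c + c0) i))
          = ∑ c ∈ C, sgn2 (∑ i, u i * c i) := by
        refine Finset.sum_equiv (Equiv.addRight c0) (fun c => ?_) (fun c _ => rfl)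
        simpa using hmem c
      have expand : ∀ c, sgn2 (∑ i, u i * (c + c0) i) = - sgn2 (∑ i, u i * c i) := by
        intro c
        have : (∑ i, u i * (c + c0) i) = (∑ i, u i * c i) + (∑ i, u i * c0 i) := by
          rw [← Finset.sum_add_distrib]
          exact Finset.sum_congr rfl fun i _ => by simp [Pi.add_apply, mul_add]
        rw [this, sgn2_add, hc01, sgn2_one, mul_neg_one]
      rw [Finset.sum_congr rfl fun c _ => expand c] at key
      rw [Finset.sum_neg_distrib] at key
      have h0 : (2:ℂ) * (∑ c ∈ C, sgn2 (∑ i, u i * c i)) = 0 := by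
        linear_combination key.symm
      exact (mul_eq_zero.mp h0).resolve_left two_ne_zero
  -- evaluate T using hchi
  have hTB : (∑ u : Fin N → ZMod 2, I ^ (wt u) * ∑ c ∈ C, sgn2 (∑ i, u i * c i))
      = (C.card : ℂ) * (C.card : ℂ) := by
    have : ∀ u : Fin N → ZMod 2, I ^ (wt u) * (∑ c ∈ C, sgn2 (∑ i, u i * c i))
        = if u ∈ C then (C.card : ℂ) else 0 := by
      intro u
      rw [hchi u]
      by_cases hu : u ∈ C
      · rw [if_pos hu]
        obtain ⟨k, hk⟩ := hII u hu
        rw [hk, pow_mul, I_pow_four', one_pow, one_mul]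
      · rw [if_neg hu, mul_zero]
    rw [Finset.sum_congr rfl fun u _ => this u]
    rw [Finset.sum_ite_mem, Finset.univ_inter, Finset.sum_const, nsmul_eq_mul]
  -- Side A: product expansion
  have hTA : (∑ u : Fin N → ZMod 2, I ^ (wt u) * ∑ c ∈ C, sgn2 (∑ i, u i * c i))
      = (C.card : ℂ) * ((1 : ℂ) + I) ^ N := by
    have hswap : (∑ u : Fin N → ZMod 2, I ^ (wt u) * ∑ c ∈ C, sgn2 (∑ i, u i * c i))
        = ∑ c ∈ C, ∑ u : Fin N → ZMod 2, I ^ (wt u) * sgn2 (∑ i, u i * c i) := by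
      simp_rw [Finset.mul_sum]
      exact Finset.sum_comm
    rw [hswap]
    have inner : ∀ c ∈ C, (∑ u : Fin N → ZMod 2, I ^ (wt u) * sgn2 (∑ i, u i * c i))
        = ((1 : ℂ) + I) ^ N := by
      intro c hc
      have hprod : ∀ u : Fin N → ZMod 2, I ^ (wt u) * sgn2 (∑ i, u i * c i)
          = ∏ i, (I ^ (u i).val * sgn2 (u i * c i)) := by
        intro u
        rw [wt_eq_sum_val, ← Finset.prod_pow_eq_pow_sum, sgn2_sum, Finset.prod_mul_distrib]
      rw [Finset.sum_congr rfl fun u _ => hprod u]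
      rw [← Fintype.prod_sum (f := fun (i : Fin N) (x : ZMod 2) =>
        Complex.I ^ x.val * sgn2 (x * c i))]
      have hcoord : ∀ i, (∑ x : ZMod 2, I ^ (x.val) * sgn2 (x * c i))
          = 1 + I * sgn2 (c i) := by
        intro i
        have huniv : (univ : Finset (ZMod 2)) = {0, 1} := by decide
        rw [huniv, Finset.sum_pair (by decide)]
        have h0 : (0 : ZMod 2).val = 0 := rfl
        have h1 : (1 : ZMod 2).val = 1 := rfl
        simp [h0, h1, sgn2_zero]
      rw [Finset.prod_congr rfl fun i _ => hcoord i]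
      rw [← Finset.prod_filter_mul_prod_filter_not univ (fun i => c i ≠ 0)]
      have hA : ∀ i ∈ univ.filter (fun i => c i ≠ 0), (1 + I * sgn2 (c i)) = 1 - I := by
        intro i hi
        rcases zmod2_cases (c i) with h | h
        · exact absurd h (Finset.mem_filter.mp hi).2
        · rw [h, sgn2_one]; ring
      have hB : ∀ i ∈ univ.filter (fun i => ¬ c i ≠ 0), (1 + I * sgn2 (c i)) = 1 + I := by
        intro i hi
        have h := (Finset.mem_filter.mp hi).2
        push_neg at h
        rw [h, sgn2_zero, mul_one]
      rw [Finset.prod_congr rfl hA, Finset.prod_congr rfl hB,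
        Finset.prod_const, Finset.prod_const]
      have hw : (univ.filter fun i => c i ≠ 0).card = wt c := rfl
      have hwle : wt c ≤ N := by
        rw [← hw]
        calc (univ.filter fun i => c i ≠ 0).card ≤ (univ : Finset (Fin N)).card :=
              Finset.card_filter_le _ _
          _ = N := by simp
      have hwc : (univ.filter fun i => ¬ c i ≠ 0).card = N - wt c := by
        have := Finset.card_filter_add_card_filter_not
          (s := (univ : Finset (Fin N))) (p := fun i => c i ≠ 0)
        simp only [Finset.card_univ, Fintype.card_fin] at this
        rw [← hw]; omega
      rw [hw, hwc]
      have h1I : (1 : ℂ) - I = (1 + I) * (-I) := by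
        linear_combination Complex.I_sq
      rw [h1I, mul_pow]
      obtain ⟨k, hk⟩ := hII c hc
      have hneg : (-I) ^ (wt c) = 1 := by
        rw [hk, pow_mul, negI_pow_four, one_pow]
      rw [hneg, mul_one, ← pow_add]
      congr 1
      omega
    rw [Finset.sum_congr rfl inner, Finset.sum_const, nsmul_eq_mul]
  -- combine
  have hcard : (C.card : ℂ) = ((1 : ℂ) + I) ^ N := by
    have h := hTB.symm.trans hTA
    exact mul_left_cancel₀ (Nat.cast_ne_zero.mpr hcardpos.ne') h
  -- final step: (1+I)^N positive real implies 8 ∣ N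
  have p2 : ((1:ℂ) + I) ^ 2 = 2 * I := by linear_combination Complex.I_sq
  have p3 : ((1:ℂ) + I) ^ 3 = -2 + 2 * I := by
    calc ((1:ℂ) + I) ^ 3 = ((1:ℂ)+I)^2 * ((1:ℂ)+I) := by ring
      _ = 2 * I * ((1:ℂ)+I) := by rw [p2]
      _ = -2 + 2 * I := by linear_combination (2:ℂ) * Complex.I_sq
  have p4 : ((1:ℂ) + I) ^ 4 = -4 := by
    calc ((1:ℂ) + I) ^ 4 = (((1:ℂ)+I)^2)^2 := by ring
      _ = (2 * I)^2 := by rw [p2]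
      _ = -4 := by linear_combination (4:ℂ) * Complex.I_sq
  have p5 : ((1:ℂ) + I) ^ 5 = -4 - 4 * I := by
    calc ((1:ℂ) + I) ^ 5 = ((1:ℂ)+I)^4 * ((1:ℂ)+I) := by ring
      _ = -4 * ((1:ℂ)+I) := by rw [p4]
      _ = -4 - 4 * I := by ring
  have p6 : ((1:ℂ) + I) ^ 6 = -8 * I := by
    calc ((1:ℂ) + I) ^ 6 = ((1:ℂ)+I)^4 * ((1:ℂ)+I)^2 := by ring
      _ = -4 * (2 * I) := by rw [p4, p2]
      _ = -8 * I := by ring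
  have p7 : ((1:ℂ) + I) ^ 7 = 8 - 8 * I := by
    calc ((1:ℂ) + I) ^ 7 = ((1:ℂ)+I)^4 * ((1:ℂ)+I)^3 := by ring
      _ = -4 * (-2 + 2 * I) := by rw [p4, p3]
      _ = 8 - 8 * I := by ring
  set q := N / 8 with hq
  set r := N % 8 with hr
  have hN : N = 8 * q + r := by omega
  have heq : (C.card : ℂ) = ((16 ^ q : ℝ) : ℂ) * ((1 : ℂ) + I) ^ r := by
    rw [hcard, hN, pow_add, pow_mul, onePlusI_pow_eight]
    push_cast
    ring
  have hcpos : (1:ℝ) ≤ ((C.card : ℕ) : ℝ) := by exact_mod_cast hcardpos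
  have hKpos : (0:ℝ) < (16:ℝ) ^ q := by positivity
  have hrlt : r < 8 := Nat.mod_lt _ (by norm_num)
  interval_cases r
  · omega
  · exfalso
    rw [pow_one] at heq
    have him := congrArg Complex.im heq
    have hre := congrArg Complex.re heq
    simp only [Complex.mul_re, Complex.mul_im, Complex.ofReal_re, Complex.ofReal_im,
      Complex.add_re, Complex.add_im, Complex.one_re, Complex.one_im, Complex.I_re, Complex.I_im,
      Complex.natCast_re, Complex.natCast_im, Complex.neg_re, Complex.neg_im, Complex.sub_re,
      Complex.sub_im, Complex.re_ofNat, Complex.im_ofNat] at him hre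
    norm_num at him hre
    linarith
  · exfalso
    rw [p2] at heq
    have him := congrArg Complex.im heq
    have hre := congrArg Complex.re heq
    simp only [Complex.mul_re, Complex.mul_im, Complex.ofReal_re, Complex.ofReal_im,
      Complex.add_re, Complex.add_im, Complex.one_re, Complex.one_im, Complex.I_re, Complex.I_im,
      Complex.natCast_re, Complex.natCast_im, Complex.neg_re, Complex.neg_im, Complex.sub_re,
      Complex.sub_im, Complex.re_ofNat, Complex.im_ofNat] at him hre
    norm_num at him
  · exfalso
    rw [p3] at heq
    have him := congrArg Complex.im heq
    have hre := congrArg Complex.re heq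
    simp only [Complex.mul_re, Complex.mul_im, Complex.ofReal_re, Complex.ofReal_im,
      Complex.add_re, Complex.add_im, Complex.one_re, Complex.one_im, Complex.I_re, Complex.I_im,
      Complex.natCast_re, Complex.natCast_im, Complex.neg_re, Complex.neg_im, Complex.sub_re,
      Complex.sub_im, Complex.re_ofNat, Complex.im_ofNat] at him hre
    norm_num at him
  · exfalso
    rw [p4] at heq
    have him := congrArg Complex.im heq
    have hre := congrArg Complex.re heq
    simp only [Complex.mul_re, Complex.mul_im, Complex.ofReal_re, Complex.ofReal_im,
      Complex.add_re, Complex.add_im, Complex.one_re, Complex.one_im, Complex.I_re, Complex.I_im,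
      Complex.natCast_re, Complex.natCast_im, Complex.neg_re, Complex.neg_im, Complex.sub_re,
      Complex.sub_im, Complex.re_ofNat, Complex.im_ofNat] at him hre
    norm_num at him hre
    nlinarith
  · exfalso
    rw [p5] at heq
    have him := congrArg Complex.im heq
    have hre := congrArg Complex.re heq
    simp only [Complex.mul_re, Complex.mul_im, Complex.ofReal_re, Complex.ofReal_im,
      Complex.add_re, Complex.add_im, Complex.one_re, Complex.one_im, Complex.I_re, Complex.I_im,
      Complex.natCast_re, Complex.natCast_im, Complex.neg_re, Complex.neg_im, Complex.sub_re,
      Complex.sub_im, Complex.re_ofNat, Complex.im_ofNat] at him hre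
    norm_num at him
  · exfalso
    rw [p6] at heq
    have him := congrArg Complex.im heq
    have hre := congrArg Complex.re heq
    simp only [Complex.mul_re, Complex.mul_im, Complex.ofReal_re, Complex.ofReal_im,
      Complex.add_re, Complex.add_im, Complex.one_re, Complex.one_im, Complex.I_re, Complex.I_im,
      Complex.natCast_re, Complex.natCast_im, Complex.neg_re, Complex.neg_im, Complex.sub_re,
      Complex.sub_im, Complex.re_ofNat, Complex.im_ofNat] at him hre
    norm_num at him
  · exfalso
    rw [p7] at heq
    have him := congrArg Complex.im heq
    have hre := congrArg Complex.re heq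
    simp only [Complex.mul_re, Complex.mul_im, Complex.ofReal_re, Complex.ofReal_im,
      Complex.add_re, Complex.add_im, Complex.one_re, Complex.one_im, Complex.I_re, Complex.I_im,
      Complex.natCast_re, Complex.natCast_im, Complex.neg_re, Complex.neg_im, Complex.sub_re,
      Complex.sub_im, Complex.re_ofNat, Complex.im_ofNat] at him hre
    norm_num at him
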